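/- Let G be a countable group, H ≤ G, and suppose there exists a subgroup K ≤ G such that for every g ∈ G and every k ∈ K with k ≠ e, we have (gkg⁻¹)H(gkg⁻¹)⁻¹ ∩ H = {e}. Then for every X in the family W(H) of intersections of conjugates of H with X ≠ {e}, and for every g ∈ G and e ≠ k ∈ K, the element gkg⁻¹ does not lie in the normalizer N_G(X). -/

import Mathlib

open Pointwise

/-- The conjugate subgroup `g H g⁻¹`. -/
def conjSub {G : Type*} [Group G] (g : G) (H : Subgroup G) : Subgroup G :=
  Subgroup.map (MulAut.conj g).toMonoidHom H

/-- The family `W(H)` of subgroups that are intersections of nonempty families of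
conjugates of `H`. -/
def Wfam {G : Type*} [Group G] (H : Subgroup G) : Set (Subgroup G) :=
  {X | ∃ s : Set G, s.Nonempty ∧ X = ⨅ g ∈ s, conjSub g H}

/-- `X̃ = X \ ⋃ {Y ∈ W(H) : Y ⊊ X}`. -/
def tilde {G : Type*} [Group G] (H X : Subgroup G) : Set G :=
  (X : Set G) \ ⋃ Y ∈ {Y : Subgroup G | Y ∈ Wfam H ∧ Y < X}, (Y : Set G)

lemma mem_conjSub {G : Type*} [Group G] {a x : G} {H : Subgroup G} :
    x ∈ conjSub a H ↔ a⁻¹ * x * a ∈ H := by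
  constructor
  · rintro ⟨h, hh, rfl⟩
    have he : a⁻¹ * (MulEquiv.toMonoidHom (MulAut.conj a)) h * a = h := by
      simp [mul_assoc]
    rwa [he]
  · intro h
    exact ⟨a⁻¹ * x * a, h, by simp [mul_assoc]⟩

/-- if `(gkg⁻¹)H(gkg⁻¹)⁻¹ ∩ H = {e}` for all `g ∈ G` and `e ≠ k ∈ K`,
then `gkg⁻¹` never normalizes a nontrivial member of `W(H)`. -/
theorem not_mem_normalizer {G : Type*} [Group G] [Countable G] (H K : Subgroup G)
    (hmal : ∀ (g : G), ∀ k ∈ K, k ≠ 1 → conjSub (g * k * g⁻¹) H ⊓ H = ⊥) :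
    ∀ X ∈ Wfam H, X ≠ ⊥ →
      ∀ (g : G), ∀ k ∈ K, k ≠ 1 → g * k * g⁻¹ ∉ Subgroup.normalizer (X : Set G) := by
  rintro X ⟨s, ⟨g₀, hg₀⟩, rfl⟩ hX g k hk hk1 hc
  set X : Subgroup G := ⨅ a ∈ s, conjSub a H with hXdef
  set c : G := g * k * g⁻¹ with hcdef
  have hXle : X ≤ conjSub g₀ H := biInf_le _ hg₀
  -- pick a nontrivial element of X
  obtain ⟨x, hxX, hx1⟩ : ∃ x ∈ X, x ≠ 1 := by
    by_contra h
    push_neg at h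
    exact hX (Subgroup.eq_bot_iff_forall _ |>.mpr h)
  have hxc : c⁻¹ * x * c ∈ X := by
    rw [Subgroup.mem_normalizer_iff] at hc
    refine (hc (c⁻¹ * x * c)).mpr ?_
    have he : c * (c⁻¹ * x * c) * c⁻¹ = x := by group
    rwa [he]
  have h1 : g₀⁻¹ * x * g₀ ∈ H := by
    have := hXle hxX
    rw [mem_conjSub] at this
    exact this
  have h2 : g₀⁻¹ * x * g₀ ∈ conjSub (g₀⁻¹ * c * g₀) H := by
    rw [mem_conjSub]
    have := hXle hxc
    rw [mem_conjSub] at this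
    convert this using 1
    group
  have hmal' := hmal (g₀⁻¹ * g) k hk hk1
  have heq : g₀⁻¹ * g * k * (g₀⁻¹ * g)⁻¹ = g₀⁻¹ * c * g₀ := by
    rw [hcdef]; group
  rw [heq] at hmal'
  have : g₀⁻¹ * x * g₀ ∈ (⊥ : Subgroup G) := by
    rw [← hmal']
    exact ⟨h2, h1⟩
  rw [Subgroup.mem_bot] at this
  apply hx1
  have : x = g₀ * 1 * g₀⁻¹ := by
    rw [← this]; group
  simpa using this
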